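/- arXiv:1706.08417 — 5 statements merged into one kernel-verified Lean document; each statement's English description precedes it below -/
import Mathlib

section
/- Let X be a complex Banach space, 1 ≤ p < ∞, and let (M_k)_{k∈ℤ} be a sequence of bounded linear operators on X. Then the following are equivalent: (i) (M_k)_{k∈ℤ} is an (L^p, H^{1,p})-multiplier, i.e. for every f ∈ L^p(𝕋;X) there exists u ∈ H^{1,p}(𝕋;X) with û(k) = M_k f̂(k) for all k ∈ ℤ; (ii) (ik·M_k)_{k∈ℤ} is an (L^p, L^p)-multiplier, i.e. for every f ∈ L^p(𝕋;X) there exists v ∈ L^p(𝕋;X) with v̂(k) = ik·M_k f̂(k) for all k ∈ ℤ. -/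
open MeasureTheory AddCircle Real ENNReal

instance : Fact (0 < 2 * π) := ⟨by positivity⟩

section Aux

open Set intervalIntegral

variable {X : Type} [NormedAddCommGroup X] [NormedSpace ℂ X] [CompleteSpace X]

/-- A continuous function on a compact space is in every `L^p`. -/
lemma aux_cont_memℒp {Y : Type} [TopologicalSpace Y] [CompactSpace Y] [MeasurableSpace Y]
    [OpensMeasurableSpace Y] [SecondCountableTopology Y]
    (μ : Measure Y) [IsFiniteMeasure μ] (p : ℝ≥0∞)
    {g : Y → X} (hg : Continuous g) : MemLp g p μ := by
  obtain ⟨C, hC⟩ := (isCompact_range hg.norm).bddAbove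
  exact MemLp.of_bound hg.aestronglyMeasurable C
    (Filter.Eventually.of_forall fun x => hC (Set.mem_range_self x))

/-- Integration by parts for the primitive of an integrable function, against an
exponential-type weight, proved via Fubini. -/
lemma aux_parts {w : ℝ → X} {T : ℝ} (hT : 0 < T) (hw : IntegrableOn w (Ioc 0 T))
    (e : ℝ → ℂ) (c : ℂ) (hc : c ≠ 0)
    (he : ∀ t, HasDerivAt e (c * e t) t) (hnorm : ∀ t, ‖e t‖ = 1) :
    ∫ t in (0:ℝ)..T, e t • (∫ s in (0:ℝ)..t, w s) =
      c⁻¹ • (e T • (∫ s in (0:ℝ)..T, w s) - ∫ t in (0:ℝ)..T, e t • w t) := by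
  have hec : Continuous e := by
    rw [continuous_iff_continuousAt]; exact fun t => (he t).continuousAt
  set μ := volume.restrict (Ioc (0:ℝ) T) with hμdef
  haveI : IsFiniteMeasure μ := by
    constructor
    rw [hμdef, Measure.restrict_apply_univ, Real.volume_Ioc]
    exact ofReal_lt_top
  -- the integrand on the product space
  have hS : MeasurableSet {p : ℝ × ℝ | p.2 ≤ p.1} := measurableSet_le measurable_snd measurable_fst
  set F : ℝ → ℝ → X := fun t s => if s ≤ t then e t • w s else 0 with hFdef
  have hgm : AEStronglyMeasurable (fun p : ℝ × ℝ => e p.1 • w p.2) (μ.prod μ) :=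
    (hec.comp continuous_fst).aestronglyMeasurable.smul hw.1.comp_snd
  have hFm : AEStronglyMeasurable (Function.uncurry F) (μ.prod μ) := by
    have h1 : Function.uncurry F
        = Set.indicator {p : ℝ × ℝ | p.2 ≤ p.1} (fun p : ℝ × ℝ => e p.1 • w p.2) := by
      funext p
      rcases p with ⟨t, s⟩
      rw [Set.indicator_apply]
      rfl
    rw [h1]
    exact hgm.indicator hS
  have hbound : Integrable (fun p : ℝ × ℝ => ‖w p.2‖) (μ.prod μ) := by
    have h1 : Integrable (fun _ : ℝ => (1:ℝ)) μ := integrable_const 1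
    have := h1.mul_prod hw.norm
    simpa using this
  have hFint : Integrable (Function.uncurry F) (μ.prod μ) := by
    refine hbound.mono' hFm ?_
    filter_upwards with p
    rcases p with ⟨t, s⟩
    show ‖F t s‖ ≤ ‖w s‖
    rw [hFdef]
    by_cases h : s ≤ t
    · simp only [if_pos h, norm_smul, hnorm, one_mul]
      exact le_rfl
    · simp only [if_neg h, norm_zero]; positivity
  have swap := MeasureTheory.integral_integral_swap hFint
  -- inner integral on the left
  have hleft : ∀ t ∈ Ioc (0:ℝ) T,
      (∫ s, F t s ∂μ) = e t • ∫ s in (0:ℝ)..t, w s := by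
    intro t ht
    have h1 : (fun s => F t s) = (Iic t).indicator (fun s => e t • w s) := by
      funext s
      rw [hFdef, Set.indicator_apply]
      simp only [Set.mem_Iic]
    rw [h1, MeasureTheory.integral_indicator measurableSet_Iic, hμdef,
      Measure.restrict_restrict measurableSet_Iic]
    have h2 : Iic t ∩ Ioc 0 T = Ioc 0 t := by
      ext s
      simp only [Set.mem_inter_iff, Set.mem_Iic, Set.mem_Ioc]
      exact ⟨fun h => ⟨h.2.1, h.1⟩, fun h => ⟨h.2, h.1, h.2.trans ht.2⟩⟩
    rw [h2, ← intervalIntegral.integral_of_le ht.1.le, intervalIntegral.integral_smul]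
  -- inner integral on the right
  have hright : ∀ s ∈ Ioc (0:ℝ) T,
      (∫ t, F t s ∂μ) = (c⁻¹ * (e T - e s)) • w s := by
    intro s hs
    have h1 : (fun t => F t s) = (Ici s).indicator (fun t => e t • w s) := by
      funext t
      rw [hFdef, Set.indicator_apply]
      simp only [Set.mem_Ici]
    rw [h1, MeasureTheory.integral_indicator measurableSet_Ici, hμdef,
      Measure.restrict_restrict measurableSet_Ici]
    have h2 : Ici s ∩ Ioc 0 T = Icc s T := by
      ext t
      simp only [Set.mem_inter_iff, Set.mem_Ici, Set.mem_Ioc, Set.mem_Icc]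
      exact ⟨fun h => ⟨h.1, h.2.2⟩, fun h => ⟨h.1, hs.1.trans_le h.1, h.2⟩⟩
    have hint_e : ∫ t in s..T, e t = c⁻¹ * (e T - e s) := by
      have h3 : ∫ t in s..T, c * e t = e T - e s :=
        intervalIntegral.integral_eq_sub_of_hasDerivAt (fun t _ => he t)
          ((continuous_const.mul hec).intervalIntegrable _ _)
      rw [intervalIntegral.integral_const_mul] at h3
      rw [← h3, inv_mul_cancel_left₀ hc]
    rw [h2, integral_Icc_eq_integral_Ioc, ← intervalIntegral.integral_of_le hs.2,
      intervalIntegral.integral_smul_const, hint_e]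
  -- integrability facts for the final computation
  have hev : Integrable (fun s => e s • w s) μ :=
    hw.norm.mono' (hec.aestronglyMeasurable.restrict.smul hw.1)
      (Filter.Eventually.of_forall fun s => by rw [norm_smul, hnorm, one_mul])
  have hA : Integrable (fun s => c⁻¹ • (e T • w s)) μ := ((hw.smul (e T)).smul c⁻¹)
  have hB : Integrable (fun s => c⁻¹ • (e s • w s)) μ := hev.smul c⁻¹
  calc
    ∫ t in (0:ℝ)..T, e t • (∫ s in (0:ℝ)..t, w s)
        = ∫ t, (∫ s, F t s ∂μ) ∂μ := by
          rw [intervalIntegral.integral_of_le hT.le]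
          exact integral_congr_ae ((ae_restrict_iff' measurableSet_Ioc).mpr
            (Filter.Eventually.of_forall fun t ht => (hleft t ht).symm))
    _ = ∫ s, (∫ t, F t s ∂μ) ∂μ := swap
    _ = ∫ s, (c⁻¹ * (e T - e s)) • w s ∂μ :=
          integral_congr_ae ((ae_restrict_iff' measurableSet_Ioc).mpr
            (Filter.Eventually.of_forall fun s hs => hright s hs))
    _ = c⁻¹ • (e T • (∫ s in (0:ℝ)..T, w s) - ∫ t in (0:ℝ)..T, e t • w t) := by
          simp only [mul_smul, sub_smul, smul_sub]
          rw [integral_sub hA hB, MeasureTheory.integral_smul, MeasureTheory.integral_smul,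
            MeasureTheory.integral_smul, intervalIntegral.integral_of_le hT.le,
            intervalIntegral.integral_of_le hT.le, hμdef]

end Aux

/- STATEMENT 3: `(M_k)` is an `(L^p, H^{1,p})`-multiplier iff `(ik·M_k)` is an
`(L^p, L^p)`-multiplier, for `1 ≤ p < ∞`. -/

theorem multiplier_Lp_H1p_iff
    {X : Type} [NormedAddCommGroup X] [NormedSpace ℂ X] [CompleteSpace X]
    (p : ℝ≥0∞) (hp1 : 1 ≤ p) (hp2 : p ≠ ⊤) (M : ℤ → X →L[ℂ] X) :
    (∀ f : AddCircle (2 * π) → X, MemLp f p haarAddCircle →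
        ∃ u : AddCircle (2 * π) → X, MemLp u p haarAddCircle ∧
          (∃ v : AddCircle (2 * π) → X, MemLp v p haarAddCircle ∧
            ∀ k : ℤ, fourierCoeff v k = (Complex.I * (k : ℂ)) • fourierCoeff u k) ∧
          ∀ k : ℤ, fourierCoeff u k = M k (fourierCoeff f k)) ↔
      (∀ f : AddCircle (2 * π) → X, MemLp f p haarAddCircle →
        ∃ v : AddCircle (2 * π) → X, MemLp v p haarAddCircle ∧
          ∀ k : ℤ, fourierCoeff v k = (Complex.I * (k : ℂ)) • (M k (fourierCoeff f k))) := by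
  have hT : (0:ℝ) < 2 * π := by positivity
  constructor
  · intro h f hf
    obtain ⟨u, hu, ⟨v, hv, hvu⟩, huf⟩ := h f hf
    exact ⟨v, hv, fun k => by rw [hvu k, huf k]⟩
  · intro h f hf
    obtain ⟨v, hv, hvf⟩ := h f hf
    have hvint : Integrable v haarAddCircle := hv.integrable hp1
    have hv0 : fourierCoeff v 0 = 0 := by simpa using hvf 0
    set w : ℝ → X := fun t => v (t : AddCircle (2 * π)) with hwdef
    have hvol : Integrable v (volume : Measure (AddCircle (2 * π))) := by
      rw [volume_eq_smul_haarAddCircle]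
      exact hvint.smul_measure ofReal_ne_top
    have hwint : IntegrableOn w (Set.Ioc 0 (2 * π)) := by
      have h1 := (AddCircle.measurePreserving_mk (2 * π) 0).integrable_comp hvol.1
      rw [zero_add] at h1
      exact h1.mpr hvol
    have hcoeff : ∀ (g : AddCircle (2 * π) → X) (n : ℤ), fourierCoeff g n
        = (1 / (2 * π)) • ∫ x in (0:ℝ)..(2 * π), fourier (-n) (x : AddCircle (2 * π)) • g x := by
      intro g n
      rw [fourierCoeff_eq_intervalIntegral g n 0, zero_add]
    have hmean : ∫ s in (0:ℝ)..(2 * π), w s = 0 := by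
      have h1 := hcoeff v 0
      rw [hv0] at h1
      simp only [neg_zero, fourier_zero, one_smul] at h1
      have h2 := congrArg (fun x : X => (2 * π : ℝ) • x) h1
      simp only [smul_zero, smul_smul, mul_one_div, div_self (ne_of_gt hT), one_smul] at h2
      exact h2.symm
    set G : ℝ → X := fun t => ∫ s in (0:ℝ)..t, w s with hGdef
    have hG0 : G 0 = 0 := intervalIntegral.integral_same
    have hGT : G (2 * π) = 0 := hmean
    have hwIcc : IntegrableOn w (Set.Icc 0 (2 * π)) := by
      rwa [integrableOn_Icc_iff_integrableOn_Ioc]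
    have hGcont : ContinuousOn G (Set.Icc 0 (2 * π)) := by
      have h1 := intervalIntegral.continuousOn_primitive hwIcc
      exact h1.congr fun x hx => intervalIntegral.integral_of_le hx.1
    set U : AddCircle (2 * π) → X := liftIco (2 * π) 0 G with hUdef
    have hUcont : Continuous U :=
      liftIco_continuous (by rw [zero_add, hG0, hGT]) (by rwa [zero_add])
    have hUmem : ∀ q : ℝ≥0∞, MemLp U q haarAddCircle := fun q =>
      aux_cont_memℒp _ q hUcont
    have hUcoe : ∀ t ∈ Set.Icc (0:ℝ) (2 * π), U (t : AddCircle (2 * π)) = G t := by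
      intro t ht
      rcases eq_or_lt_of_le ht.2 with hteq | htlt
      · have h1 : (t : AddCircle (2 * π)) = ((0:ℝ) : AddCircle (2 * π)) := by
          rw [hteq]
          push_cast
          rw [AddCircle.coe_period]
        rw [h1, hUdef, liftIco_coe_apply (by constructor <;> simp [Real.pi_pos]), hG0, hteq, hGT]
      · exact liftIco_coe_apply (by rw [zero_add]; exact ⟨ht.1, htlt⟩)
    have hUcoeff : ∀ n : ℤ, fourierCoeff U n
        = (1 / (2 * π)) • ∫ x in (0:ℝ)..(2 * π), fourier (-n) (x : AddCircle (2 * π)) • G x := by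
      intro n
      rw [hcoeff U n]
      congr 1
      apply intervalIntegral.integral_congr
      intro x hx
      show fourier (-n) (x : AddCircle (2 * π)) • U (x : AddCircle (2 * π))
        = fourier (-n) (x : AddCircle (2 * π)) • G x
      rw [hUcoe x (by rwa [Set.uIcc_of_le hT.le] at hx)]
    -- the key relation for nonzero k
    have key : ∀ k : ℤ, k ≠ 0 →
        (Complex.I * (k:ℂ)) • fourierCoeff U k = fourierCoeff v k := by
      intro k hk
      set c : ℂ := 2 * ↑π * Complex.I * ↑(-k : ℤ) / ↑(2 * π : ℝ) with hcdef
      have hcval : c = -(Complex.I * (k:ℂ)) := by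
        rw [hcdef]
        push_cast
        field_simp [Complex.ofReal_ne_zero.mpr Real.pi_ne_zero]
      have hIk : (Complex.I * (k:ℂ)) ≠ 0 :=
        mul_ne_zero Complex.I_ne_zero (Int.cast_ne_zero.mpr hk)
      have hcne : c ≠ 0 := by rw [hcval]; exact neg_ne_zero.mpr hIk
      have hparts := aux_parts hT hwint
        (fun t : ℝ => (fourier (-k) (t : AddCircle (2 * π)) : ℂ)) c hcne
        (fun t => by rw [hcdef]; exact hasDerivAt_fourier (2 * π) (-k) t)
        (fun t => Circle.norm_coe _)
      rw [hUcoeff k, hparts, hmean, smul_zero, zero_sub, hcoeff v k]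
      rw [smul_comm]
      congr 1
      have hmul : (Complex.I * (k:ℂ)) * (-(Complex.I * (k:ℂ)))⁻¹ = -1 := by
        rw [inv_neg, mul_neg, mul_inv_cancel₀ hIk]
      rw [hcval, smul_smul, hmul, neg_one_smul, neg_neg]
    -- integral of a nonconstant character vanishes
    have hfourier_int : ∀ n : ℤ, n ≠ 0 →
        ∫ x in (0:ℝ)..(2 * π), (fourier n (x : AddCircle (2 * π)) : ℂ) = 0 := by
      intro n hn
      set c : ℂ := 2 * ↑π * Complex.I * ↑n / ↑(2 * π : ℝ) with hcdef
      have hcval : c = Complex.I * (n:ℂ) := by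
        rw [hcdef]; push_cast; field_simp [Complex.ofReal_ne_zero.mpr Real.pi_ne_zero]
      have hcne : c ≠ 0 := by
        rw [hcval]; exact mul_ne_zero Complex.I_ne_zero (Int.cast_ne_zero.mpr hn)
      have hec : Continuous fun t : ℝ => (fourier n (t : AddCircle (2 * π)) : ℂ) := by
        rw [continuous_iff_continuousAt]
        exact fun t => (hasDerivAt_fourier (2 * π) n t).continuousAt
      have h3 : ∫ t in (0:ℝ)..(2 * π), c * fourier n (t : AddCircle (2 * π))
          = fourier n ((2 * π : ℝ) : AddCircle (2 * π)) - fourier n ((0:ℝ) : AddCircle (2 * π)) :=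
        intervalIntegral.integral_eq_sub_of_hasDerivAt
          (f := fun t : ℝ => (fourier n (t : AddCircle (2 * π)) : ℂ))
          (f' := fun t : ℝ => c * fourier n (t : AddCircle (2 * π)))
          (fun t _ => by rw [hcdef]; exact hasDerivAt_fourier (2 * π) n t)
          ((continuous_const.mul hec).intervalIntegrable _ _)
      have h4 : ((2 * π : ℝ) : AddCircle (2 * π)) = ((0:ℝ) : AddCircle (2 * π)) := by
        push_cast
        rw [AddCircle.coe_period]
      rw [h4, sub_self, intervalIntegral.integral_const_mul] at h3
      exact (mul_eq_zero.mp h3).resolve_left hcne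
    -- Fourier coefficients of constants
    have hconstcoeff : ∀ (C : X) (n : ℤ),
        fourierCoeff (fun _ : AddCircle (2 * π) => C) n = if n = 0 then C else 0 := by
      intro C n
      rw [hcoeff _ n, intervalIntegral.integral_smul_const]
      by_cases hn : n = 0
      · subst hn
        rw [if_pos rfl, show (-0 : ℤ) = 0 from neg_zero]
        simp_rw [fourier_zero]
        rw [intervalIntegral.integral_const, sub_zero, Complex.real_smul, mul_one,
          ← smul_assoc, Complex.real_smul, ← Complex.ofReal_mul, one_div,
          inv_mul_cancel₀ (ne_of_gt hT), Complex.ofReal_one, one_smul]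
      · rw [if_neg hn, hfourier_int (-n) (neg_ne_zero.mpr hn), zero_smul, smul_zero]
    -- additivity of Fourier coefficients
    have hsmul_int : ∀ (g : AddCircle (2 * π) → X), Integrable g haarAddCircle → ∀ n : ℤ,
        Integrable (fun t => (fourier (-n) t : ℂ) • g t) haarAddCircle := by
      intro g hg n
      refine hg.norm.mono' ((map_continuous (fourier (-n))).aestronglyMeasurable.smul hg.1) ?_
      filter_upwards with t
      have hn1 : ‖(fourier (-n) t : ℂ)‖ = 1 := Circle.norm_coe _
      rw [norm_smul, hn1, one_mul]
    have hadd : ∀ (g g' : AddCircle (2 * π) → X), Integrable g haarAddCircle →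
        Integrable g' haarAddCircle → ∀ n : ℤ,
        fourierCoeff (fun x => g x + g' x) n = fourierCoeff g n + fourierCoeff g' n := by
      intro g g' hg hg' n
      simp only [fourierCoeff, smul_add]
      exact integral_add (hsmul_int g hg n) (hsmul_int g' hg' n)
    -- assemble u
    set C0 : X := M 0 (fourierCoeff f 0) - fourierCoeff U 0 with hC0def
    have hucoeff : ∀ n : ℤ, fourierCoeff (fun x => U x + C0) n
        = fourierCoeff U n + (if n = 0 then C0 else 0) := by
      intro n
      rw [hadd U (fun _ => C0) ((hUmem 1).integrable le_rfl) (integrable_const C0) n,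
        hconstcoeff]
    refine ⟨fun x => U x + C0, (hUmem p).add (memLp_const C0), ⟨v, hv, ?_⟩, ?_⟩
    · intro k
      by_cases hk : k = 0
      · subst hk
        simpa using hv0
      · rw [hucoeff, if_neg hk, add_zero]
        exact (key k hk).symm
    · intro k
      by_cases hk : k = 0
      · subst hk
        rw [hucoeff, if_pos rfl, hC0def, add_sub_cancel]
      · rw [hucoeff, if_neg hk, add_zero]
        have hIk : (Complex.I * (k:ℂ)) ≠ 0 :=
          mul_ne_zero Complex.I_ne_zero (Int.cast_ne_zero.mpr hk)
        have h1 : (Complex.I * (k:ℂ)) • fourierCoeff U k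
            = (Complex.I * (k:ℂ)) • (M k (fourierCoeff f k)) := by
          rw [key k hk, hvf k]
        exact smul_right_injective X hIk h1
end

section
/- Let X be a complex Banach space, 1 ≤ p < ∞, and let (M_k)_{k∈ℤ} be a sequence of bounded linear operators on X. Then the following are equivalent: (i) (M_k)_{k∈ℤ} is an (L^p, H^{2,p})-multiplier, i.e. for every f ∈ L^p(𝕋;X) there exists u ∈ H^{2,p}(𝕋;X) with û(k) = M_k f̂(k) for all k ∈ ℤ; (ii) ((−k²)·M_k)_{k∈ℤ} is an (L^p, L^p)-multiplier, i.e. for every f ∈ L^p(𝕋;X) there exists v ∈ L^p(𝕋;X) with v̂(k) = (−k²)·M_k f̂(k) for all k ∈ ℤ. -/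
open MeasureTheory AddCircle Real ENNReal

set_option linter.unusedSectionVars false

section Aux

variable {T : ℝ} [hT : Fact (0 < T)]
variable {X : Type} [NormedAddCommGroup X] [NormedSpace ℂ X] [CompleteSpace X]

lemma norm_fourier_eq (n : ℤ) (t : AddCircle T) : ‖(fourier n t : ℂ)‖ = 1 := Circle.norm_coe _

lemma nnnorm_fourier_eq (n : ℤ) (t : AddCircle T) : ‖(fourier n t : ℂ)‖₊ = 1 :=
  NNReal.coe_injective (by simpa using norm_fourier_eq n t)

lemma integral_fourier' (m : ℤ) :
    (∫ t : AddCircle T, (fourier m t : ℂ) ∂haarAddCircle) = if m = 0 then 1 else 0 := by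
  split_ifs with h
  · subst h; simp [fourier_zero]
  · exact integral_eq_zero_of_add_right_eq_neg (fourier_add_half_inv_index h hT.out)

lemma norm_fourierCoeff_le (f : AddCircle T → X) (n : ℤ) :
    ‖fourierCoeff f n‖ ≤ ∫ t, ‖f t‖ ∂haarAddCircle := by
  rw [fourierCoeff]
  refine (norm_integral_le_integral_norm _).trans_eq ?_
  simp [norm_smul, norm_fourier_eq, Circle.norm_coe]

variable (c : ℤ → X) (hc : Summable fun k => ‖c k‖)
include hc

lemma series_summable (t : AddCircle T) : Summable fun k : ℤ => (fourier k t : ℂ) • c k := by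
  refine Summable.of_norm ?_
  simpa only [norm_smul, norm_fourier_eq, one_mul] using hc

lemma series_continuous : Continuous fun t : AddCircle T => ∑' k : ℤ, (fourier k t : ℂ) • c k := by
  refine continuous_tsum (fun k => ?_) hc fun k t => ?_
  · exact ((fourier k).continuous).smul continuous_const
  · rw [norm_smul, norm_fourier_eq, one_mul]

lemma series_memℒp (p : ℝ≥0∞) :
    MemLp (fun t : AddCircle T => ∑' k : ℤ, (fourier k t : ℂ) • c k) p haarAddCircle := by
  refine MemLp.of_bound ((series_continuous c hc).aestronglyMeasurable) (∑' k, ‖c k‖) ?_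
  refine Filter.Eventually.of_forall fun t => ?_
  refine (norm_tsum_le_tsum_norm ?_).trans (le_of_eq (tsum_congr fun k => ?_)) <;>
    simp only [norm_smul, norm_fourier_eq, one_mul]
  exact hc

lemma series_fourierCoeff (n : ℤ) :
    fourierCoeff (fun t : AddCircle T => ∑' k : ℤ, (fourier k t : ℂ) • c k) n = c n := by
  rw [fourierCoeff]
  have h1 : ∀ t : AddCircle T,
      (fourier (-n) t : ℂ) • ∑' k : ℤ, (fourier k t : ℂ) • c k
      = ∑' k : ℤ, (fourier (-n + k) t : ℂ) • c k := by
    intro t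
    rw [← Summable.tsum_const_smul _ (series_summable c hc t)]
    exact tsum_congr fun k => by rw [smul_smul, ← fourier_add]
  simp_rw [h1]
  rw [integral_tsum (f := fun k t => (fourier (-n + k) t : ℂ) • c k) (fun k => (((fourier (-n+k)).continuous).smul
      continuous_const).aestronglyMeasurable) ?_]
  · have h2 : ∀ k : ℤ, (∫ t : AddCircle T, (fourier (-n + k) t : ℂ) • c k ∂haarAddCircle)
        = (if k = n then (1:ℂ) else 0) • c k := by
      intro k
      rw [integral_smul_const, integral_fourier']
      congr 1
      simp [neg_add_eq_zero, eq_comm]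
    simp_rw [h2]
    rw [tsum_eq_single n (fun k hk => by simp [hk])]
    simp
  · have h3 : ∀ k : ℤ, (∫⁻ t : AddCircle T, ‖(fourier (-n + k) t : ℂ) • c k‖₊ ∂haarAddCircle)
        = (‖c k‖₊ : ℝ≥0∞) := by
      intro k
      simp_rw [nnnorm_smul, nnnorm_fourier_eq, one_mul]
      simp
    simp_rw [enorm_eq_nnnorm, h3]
    exact ENNReal.tsum_coe_ne_top_iff_summable.mpr (NNReal.summable_coe.mp (by simpa using hc))

end Aux

/- STATEMENT 4: `(M_k)` is an `(L^p, H^{2,p})`-multiplier iff `((−k²)·M_k)` is an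
`(L^p, L^p)`-multiplier, for `1 ≤ p < ∞`. -/

theorem multiplier_Lp_H2p_iff
    {X : Type} [NormedAddCommGroup X] [NormedSpace ℂ X] [CompleteSpace X]
    (p : ℝ≥0∞) (hp1 : 1 ≤ p) (hp2 : p ≠ ⊤) (M : ℤ → X →L[ℂ] X) :
    (∀ f : AddCircle (2 * π) → X, MemLp f p haarAddCircle →
        ∃ u : AddCircle (2 * π) → X, MemLp u p haarAddCircle ∧
          (∃ v : AddCircle (2 * π) → X, MemLp v p haarAddCircle ∧
            ∀ k : ℤ, fourierCoeff v k = (-(k : ℂ) ^ 2) • fourierCoeff u k) ∧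
          ∀ k : ℤ, fourierCoeff u k = M k (fourierCoeff f k)) ↔
      (∀ f : AddCircle (2 * π) → X, MemLp f p haarAddCircle →
        ∃ v : AddCircle (2 * π) → X, MemLp v p haarAddCircle ∧
          ∀ k : ℤ, fourierCoeff v k = (-(k : ℂ) ^ 2) • (M k (fourierCoeff f k))) := by
  constructor
  · intro h f hf
    obtain ⟨u, hu, ⟨v, hv, hvu⟩, huf⟩ := h f hf
    exact ⟨v, hv, fun k => by rw [hvu k, huf k]⟩
  · intro h f hf
    obtain ⟨v, hv, hvc⟩ := h f hf
    set c : ℤ → X := fun k => M k (fourierCoeff f k) with hc_def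
    set C : ℝ := ∫ t, ‖v t‖ ∂haarAddCircle with hC_def
    -- For k ≠ 0, `c k` is recovered from the Fourier coefficients of `v`.
    have hck : ∀ k : ℤ, k ≠ 0 → c k = (-(k : ℂ) ^ 2)⁻¹ • fourierCoeff v k := by
      intro k hk
      have hne : (-(k : ℂ) ^ 2) ≠ 0 := by
        simp only [ne_eq, neg_eq_zero, pow_eq_zero_iff, OfNat.ofNat_ne_zero, not_false_eq_true,
          and_true]
        exact_mod_cast hk
      rw [hvc k, inv_smul_smul₀ hne]
    -- Summability of the coefficients.
    have hc : Summable fun k => ‖c k‖ := by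
      have hbound : ∀ k : ℤ, ‖c k‖ ≤
          (if k = 0 then ‖c 0‖ else 0) + C * (((k : ℝ) ^ 2)⁻¹) := by
        intro k
        by_cases hk : k = 0
        · subst hk; simp
        · rw [if_neg hk, zero_add, hck k hk, norm_smul]
          have h1 : ‖(-(k : ℂ) ^ 2)⁻¹‖ = ((k : ℝ) ^ 2)⁻¹ := by
            rw [norm_inv, norm_neg, norm_pow]
            norm_num [Complex.norm_intCast, sq_abs]
          rw [h1, mul_comm]
          exact mul_le_mul_of_nonneg_right (norm_fourierCoeff_le v k) (by positivity)
      refine Summable.of_nonneg_of_le (fun k => norm_nonneg _) hbound ?_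
      refine Summable.add ⟨_, hasSum_ite_eq (0 : ℤ) ‖c 0‖⟩ ?_
      have : Summable fun k : ℤ => 1 / ((k : ℝ) ^ 2) :=
        (Real.summable_one_div_int_pow (p := 2)).mpr one_lt_two
      simpa [div_eq_mul_inv] using this.mul_left C
    refine ⟨fun t => ∑' k : ℤ, (fourier k t : ℂ) • c k, series_memℒp c hc p,
      ⟨v, hv, fun k => ?_⟩, fun k => series_fourierCoeff c hc k⟩
    rw [series_fourierCoeff c hc k]
    exact hvc k
end

section
/- Let X be a complex Banach space, A : D(A) ⊆ X → X a linear operator, and 1 ≤ p < ∞. Suppose that for every f ∈ L^p(𝕋;X) there exists z ∈ L^p(𝕋;X) such that ẑ(k) ∈ D(A) and (ik)³ ẑ(k) − A ẑ(k) = f̂(k) for all k ∈ ℤ. Then for every k ∈ ℤ the map Δ_k : D(A) → X, Δ_k x = (ik)³x − Ax, is surjective: for every y ∈ X there exists x ∈ D(A) with (ik)³x − Ax = y. -/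
open MeasureTheory AddCircle Real ENNReal

lemma fourierCoeff_fourier_smul
    {X : Type} [NormedAddCommGroup X] [NormedSpace ℂ X] [CompleteSpace X]
    (k : ℤ) (y : X) :
    fourierCoeff (fun t : AddCircle (2 * π) => fourier k t • y) k = y := by
  unfold fourierCoeff
  have : ∀ t : AddCircle (2 * π),
      fourier (-k) t • (fourier k t • y) = y := by
    intro t
    rw [smul_smul, ← fourier_add]
    simp
  simp only [this]
  simp [measure_univ]

/- STATEMENT 8: If for every `f ∈ L^p(𝕋;X)` there is `z ∈ L^p(𝕋;X)` with
`ẑ(k) ∈ D(A)` and `(ik)³ ẑ(k) − A ẑ(k) = f̂(k)` for all `k`, then every symbol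
`Δ_k x = (ik)³x − Ax` is surjective from `D(A)` onto `X`. -/

theorem symbols_surjective_of_solvable
    {X : Type} [NormedAddCommGroup X] [NormedSpace ℂ X] [CompleteSpace X]
    (D : Submodule ℂ X) (A : D →ₗ[ℂ] X)
    (p : ℝ≥0∞) (hp1 : 1 ≤ p) (hp2 : p ≠ ⊤)
    (hsolv : ∀ f : AddCircle (2 * π) → X, MemLp f p haarAddCircle →
      ∃ z : AddCircle (2 * π) → X, MemLp z p haarAddCircle ∧
        ∀ k : ℤ, ∃ h : fourierCoeff z k ∈ D,
          (Complex.I * (k : ℂ)) ^ 3 • fourierCoeff z k - A ⟨fourierCoeff z k, h⟩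
            = fourierCoeff f k) :
    ∀ k : ℤ, ∀ y : X, ∃ x : D, (Complex.I * (k : ℂ)) ^ 3 • (x : X) - A x = y := by
  intro k y
  set f : AddCircle (2 * π) → X := fun t => fourier k t • y with hf
  have hcont : Continuous f := ((fourier k).continuous).smul continuous_const
  have hcs : HasCompactSupport f :=
    IsCompact.of_isClosed_subset isCompact_univ (isClosed_tsupport f) (Set.subset_univ _)
  have hmem : MemLp f p haarAddCircle := hcont.memLp_of_hasCompactSupport hcs
  obtain ⟨z, hz, hk⟩ := hsolv f hmem
  obtain ⟨h, heq⟩ := hk k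
  refine ⟨⟨fourierCoeff z k, h⟩, ?_⟩
  rw [heq, hf, fourierCoeff_fourier_smul]
end

section
/- Let X be a complex Banach space, A a bounded linear operator on X, and let k ∈ ℤ with k ≠ 0 and k ≠ −1. Suppose the operators B_k := −ik³I + A and B_{k+1} := −i(k+1)³I + A are both invertible with bounded inverses N_k := B_k^{-1} and N_{k+1} := B_{k+1}^{-1}, and set M_k := −ik³ N_k and M_{k+1} := −i(k+1)³ N_{k+1}. Then the following operator identity holds: k·(M_{k+1} − M_k) = (k(3k² + 3k + 1)/(k+1)³) · M_{k+1} ∘ (I − M_k). -/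
/- STATEMENT 13: For a bounded operator `A`, `k ∈ ℤ`, `k ≠ 0`, `k ≠ -1`, if
`B_k = −ik³I + A` and `B_{k+1} = −i(k+1)³I + A` are invertible with bounded inverses
`N_k`, `N_{k+1}`, and `M_k = −ik³N_k`, `M_{k+1} = −i(k+1)³N_{k+1}`, then
`k(M_{k+1} − M_k) = (k(3k²+3k+1)/(k+1)³) · M_{k+1} ∘ (I − M_k)`. -/

theorem operator_difference_identity
    {X : Type*} [NormedAddCommGroup X] [NormedSpace ℂ X] [CompleteSpace X]
    (A : X →L[ℂ] X) (k : ℤ) (hk0 : k ≠ 0) (hk1 : k ≠ -1)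
    (Nk Nk1 : X →L[ℂ] X)
    (hNk_left : Nk ∘L ((-(Complex.I * (k : ℂ) ^ 3)) • (1 : X →L[ℂ] X) + A) = 1)
    (hNk_right : ((-(Complex.I * (k : ℂ) ^ 3)) • (1 : X →L[ℂ] X) + A) ∘L Nk = 1)
    (hNk1_left : Nk1 ∘L ((-(Complex.I * ((k : ℂ) + 1) ^ 3)) • (1 : X →L[ℂ] X) + A) = 1)
    (hNk1_right : ((-(Complex.I * ((k : ℂ) + 1) ^ 3)) • (1 : X →L[ℂ] X) + A) ∘L Nk1 = 1) :
    (k : ℂ) • ((-(Complex.I * ((k : ℂ) + 1) ^ 3)) • Nk1 - (-(Complex.I * (k : ℂ) ^ 3)) • Nk)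
      = ((k : ℂ) * (3 * (k : ℂ) ^ 2 + 3 * (k : ℂ) + 1) / ((k : ℂ) + 1) ^ 3) •
          (((-(Complex.I * ((k : ℂ) + 1) ^ 3)) • Nk1) ∘L
            (1 - (-(Complex.I * (k : ℂ) ^ 3)) • Nk)) := by
  set a : ℂ := -(Complex.I * (k : ℂ) ^ 3) with ha
  set b : ℂ := -(Complex.I * ((k : ℂ) + 1) ^ 3) with hb
  have hk1' : ((k : ℂ) + 1) ≠ 0 := by
    intro h
    apply hk1
    have : (k : ℂ) = ((-1 : ℤ) : ℂ) := by push_cast; linear_combination h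
    exact_mod_cast Int.cast_injective this
  have hodd : (3 * (k : ℂ) ^ 2 + 3 * (k : ℂ) + 1) ≠ 0 := by
    have hz : (3 * k ^ 2 + 3 * k + 1 : ℤ) ≠ 0 := by nlinarith [sq_nonneg (2 * k + 1)]
    have : ((3 * k ^ 2 + 3 * k + 1 : ℤ) : ℂ) ≠ 0 := by exact_mod_cast hz
    push_cast at this
    exact this
  have hval : a - b = Complex.I * (3 * (k : ℂ) ^ 2 + 3 * (k : ℂ) + 1) := by
    rw [ha, hb]; ring
  have hIodd : Complex.I * (3 * (k : ℂ) ^ 2 + 3 * (k : ℂ) + 1) ≠ 0 :=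
    mul_ne_zero Complex.I_ne_zero hodd
  have hab : a - b ≠ 0 := by rw [hval]; exact hIodd
  -- resolvent identity
  have h1 : Nk1 ∘L ((a • (1 : X →L[ℂ] X) + A) ∘L Nk) = Nk1 := by
    rw [hNk_right, ContinuousLinearMap.one_def, ContinuousLinearMap.comp_id]
  have h2 : (Nk1 ∘L (b • (1 : X →L[ℂ] X) + A)) ∘L Nk = Nk := by
    rw [hNk1_left, ContinuousLinearMap.one_def, ContinuousLinearMap.id_comp]
  have hthis := congrArg₂ (· - ·) h1 h2
  simp only [ContinuousLinearMap.comp_add, ContinuousLinearMap.add_comp,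
    ContinuousLinearMap.comp_smul, ContinuousLinearMap.smul_comp,
    ContinuousLinearMap.comp_id, ContinuousLinearMap.id_comp,
    ContinuousLinearMap.one_def, ContinuousLinearMap.comp_assoc] at hthis
  have hX : Nk1 ∘L Nk = (Complex.I * (3 * (k : ℂ) ^ 2 + 3 * (k : ℂ) + 1))⁻¹ • (Nk1 - Nk) := by
    rw [eq_comm, inv_smul_eq_iff₀ hIodd, ← hval, ← hthis]
    module
  simp only [ContinuousLinearMap.comp_sub, ContinuousLinearMap.one_def,
    ContinuousLinearMap.comp_id, ContinuousLinearMap.smul_comp,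
    ContinuousLinearMap.comp_smul]
  rw [hX]
  match_scalars <;> (rw [ha, hb] ; field_simp [hIodd, hk1', hodd] ; grind)
end

section
/- Let X be a complex Banach space, A : D(A) ⊆ X → X a closed linear operator, and 1 ≤ p < ∞. Suppose (i) for every k ∈ ℤ the map Δ_k : D(A) → X, Δ_k x = (ik)³x − Ax, is bijective, and (ii) the sequence ((ik)³ Δ_k^{-1})_{k∈ℤ} is an L^p-multiplier: for every f ∈ L^p(𝕋;X) there exists v ∈ L^p(𝕋;X) such that v̂(k) = (ik)³ Δ_k^{-1} f̂(k) for all k ∈ ℤ. Then for every f ∈ L^p(𝕋;X) there exists a unique z ∈ L^p(𝕋;X) such that ẑ(k) ∈ D(A) and (ik)³ ẑ(k) − A ẑ(k) = f̂(k) for all k ∈ ℤ, and moreover this z lies in H^{3,p}(𝕋;X), i.e. there exists v ∈ L^p(𝕋;X) with v̂(k) = (ik)³ ẑ(k) for all k ∈ ℤ. -/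
open MeasureTheory AddCircle Real ENNReal

open scoped NNReal BoundedContinuousFunction
open Filter Set

section Aux

/-- pointwise norm of the Fourier monomials is 1 -/
lemma aux_norm_fourier (m : ℤ) (x : AddCircle (2 * π)) : ‖fourier m x‖ = 1 := by
  rw [fourier_apply, Circle.norm_coe]

lemma aux_fourier_smul_integrable {X : Type} [NormedAddCommGroup X] [NormedSpace ℂ X]
    {g : AddCircle (2 * π) → X} (hg : Integrable g haarAddCircle) (n : ℤ) :
    Integrable (fun x : AddCircle (2 * π) => fourier n x • g x) haarAddCircle := by
  refine Integrable.mono' hg.norm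
    (((fourier n).continuous.aestronglyMeasurable).smul hg.aestronglyMeasurable) ?_
  filter_upwards with x
  rw [norm_smul, aux_norm_fourier, one_mul]

lemma aux_fourierCoeff_comp_clm {X Y : Type} [NormedAddCommGroup X] [NormedSpace ℂ X]
    [CompleteSpace X] [NormedAddCommGroup Y] [NormedSpace ℂ Y] [CompleteSpace Y]
    (T : X →L[ℂ] Y) {g : AddCircle (2 * π) → X} (hg : Integrable g haarAddCircle) (n : ℤ) :
    fourierCoeff (fun x => T (g x)) n = T (fourierCoeff g n) := by
  show (∫ t : AddCircle (2 * π), fourier (-n) t • T (g t) ∂haarAddCircle) = _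
  rw [fourierCoeff, ← T.integral_comp_comm (aux_fourier_smul_integrable hg (-n))]
  simp only [_root_.map_smul]

lemma aux_fourierCoeff_sub {X : Type} [NormedAddCommGroup X] [NormedSpace ℂ X]
    [CompleteSpace X] {g₁ g₂ : AddCircle (2 * π) → X} (h₁ : Integrable g₁ haarAddCircle)
    (h₂ : Integrable g₂ haarAddCircle) (n : ℤ) :
    fourierCoeff (fun x => g₁ x - g₂ x) n = fourierCoeff g₁ n - fourierCoeff g₂ n := by
  show (∫ t : AddCircle (2 * π), fourier (-n) t • (g₁ t - g₂ t) ∂haarAddCircle) = _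
  rw [fourierCoeff, fourierCoeff, ← integral_sub (aux_fourier_smul_integrable h₁ (-n))
    (aux_fourier_smul_integrable h₂ (-n))]
  simp only [smul_sub]

/-- A real integrable function which integrates to zero against every nonnegative bounded
continuous function vanishes a.e. -/
lemma aux_real_ae_zero {Ω : Type} [MeasurableSpace Ω] [TopologicalSpace Ω]
    [TopologicalSpace.PseudoMetrizableSpace Ω] [BorelSpace Ω]
    {μ : Measure Ω} [IsFiniteMeasure μ] {u : Ω → ℝ} (hu : Integrable u μ)
    (h : ∀ f : Ω →ᵇ ℝ≥0, ∫ x, (f x : ℝ) * u x ∂μ = 0) : u =ᵐ[μ] 0 := by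
  have hum : AEMeasurable u μ := hu.aemeasurable
  have hg : AEMeasurable (fun x => ENNReal.ofReal (u x)) μ :=
    ENNReal.measurable_ofReal.comp_aemeasurable hum
  have hg' : AEMeasurable (fun x => ENNReal.ofReal (-u x)) μ :=
    ENNReal.measurable_ofReal.comp_aemeasurable hum.neg
  have hfin : ∀ w : Ω → ℝ, Integrable w μ → (∫⁻ x, ENNReal.ofReal (w x) ∂μ) ≠ ⊤ := by
    intro w hw
    refine ne_of_lt (lt_of_le_of_lt (lintegral_mono fun x => ?_) hw.2)
    rw [← ofReal_norm, Real.norm_eq_abs]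
    exact ENNReal.ofReal_le_ofReal (le_abs_self _)
  have key : μ.withDensity (fun x => ENNReal.ofReal (u x))
      = μ.withDensity (fun x => ENNReal.ofReal (-u x)) := by
    haveI : IsFiniteMeasure (μ.withDensity (fun x => ENNReal.ofReal (u x))) :=
      isFiniteMeasure_withDensity (hfin u hu)
    apply ext_of_forall_lintegral_eq_of_IsFiniteMeasure
    intro f
    have hfc : Continuous fun x => ((f x : ℝ)) := NNReal.continuous_coe.comp f.continuous
    have hfm : AEMeasurable (fun x => ((f x : ℝ≥0∞))) μ :=
      (ENNReal.continuous_coe.comp f.continuous).measurable.aemeasurable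
    have hbdd : ∃ C, ∀ x, ‖(f x : ℝ)‖ ≤ C := by
      obtain ⟨C, hC⟩ := f.map_bounded'
      rcases isEmpty_or_nonempty Ω with hΩ | hΩ
      · exact ⟨0, fun x => (IsEmpty.false x).elim⟩
      · have x₀ := Classical.arbitrary Ω
        refine ⟨(f x₀ : ℝ) + C, fun x => ?_⟩
        have h1 : dist (f x) (f x₀) ≤ C := hC x x₀
        rw [NNReal.dist_eq] at h1
        have h2 : |(f x : ℝ) - (f x₀ : ℝ)| ≤ C := h1
        rw [Real.norm_eq_abs, abs_of_nonneg (f x).coe_nonneg]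
        cases abs_le.mp h2 with
        | intro hl hr => linarith
    have hF : Integrable (fun x => (f x : ℝ) * u x) μ :=
      hu.bdd_mul hfc.aestronglyMeasurable (Filter.Eventually.of_forall hbdd.choose_spec)
    have h0 := h f
    have heq := integral_eq_lintegral_pos_part_sub_lintegral_neg_part hF
    rw [h0] at heq
    have h1 : (∫⁻ x, ENNReal.ofReal ((f x : ℝ) * u x) ∂μ)
        = ∫⁻ x, ENNReal.ofReal (-((f x : ℝ) * u x)) ∂μ := by
      refine (ENNReal.toReal_eq_toReal_iff' (hfin _ hF) ?_).mp (by linarith)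
      have := hfin _ hF.neg
      simpa using this
    calc ∫⁻ x, (f x : ℝ≥0∞) ∂μ.withDensity (fun x => ENNReal.ofReal (u x))
        = ∫⁻ x, ENNReal.ofReal (u x) * (f x : ℝ≥0∞) ∂μ :=
          lintegral_withDensity_eq_lintegral_mul₀ hg hfm
      _ = ∫⁻ x, ENNReal.ofReal ((f x : ℝ) * u x) ∂μ := by
          congr 1; funext x
          rw [ENNReal.ofReal_mul (f x).coe_nonneg, ENNReal.ofReal_coe_nnreal, mul_comm]
      _ = ∫⁻ x, ENNReal.ofReal (-((f x : ℝ) * u x)) ∂μ := h1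
      _ = ∫⁻ x, ENNReal.ofReal (-u x) * (f x : ℝ≥0∞) ∂μ := by
          congr 1; funext x
          rw [← mul_neg, ENNReal.ofReal_mul (f x).coe_nonneg, ENNReal.ofReal_coe_nnreal, mul_comm]
      _ = ∫⁻ x, (f x : ℝ≥0∞) ∂μ.withDensity (fun x => ENNReal.ofReal (-u x)) :=
          (lintegral_withDensity_eq_lintegral_mul₀ hg' hfm).symm
  have hae : (fun x => ENNReal.ofReal (u x)) =ᵐ[μ] (fun x => ENNReal.ofReal (-u x)) :=
    (withDensity_eq_iff_of_sigmaFinite hg hg').mp key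
  filter_upwards [hae] with x hx
  show u x = 0
  by_contra hx0
  rcases lt_or_gt_of_ne hx0 with hlt | hgt
  · rw [ENNReal.ofReal_eq_zero.mpr hlt.le] at hx
    exact absurd hx.symm (ne_of_gt (ENNReal.ofReal_pos.mpr (neg_pos.mpr hlt)))
  · rw [ENNReal.ofReal_eq_zero.mpr (by linarith : -u x ≤ 0)] at hx
    exact absurd hx (ne_of_gt (ENNReal.ofReal_pos.mpr hgt))

lemma aux_fourier_unique_complex {h : AddCircle (2 * π) → ℂ}
    (hint : Integrable h haarAddCircle) (hc : ∀ n : ℤ, fourierCoeff h n = 0) :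
    h =ᵐ[haarAddCircle] 0 := by
  set μ : Measure (AddCircle (2 * π)) := haarAddCircle with hμ
  have hI : ∀ c : C(AddCircle (2 * π), ℂ), Integrable (fun x => c x * h x) μ := fun c =>
    hint.bdd_mul c.continuous.aestronglyMeasurable (Filter.Eventually.of_forall fun x => c.norm_coe_le_norm x)
  have hlip : LipschitzWith (Real.toNNReal (∫ x, ‖h x‖ ∂μ))
      (fun c : C(AddCircle (2 * π), ℂ) => ∫ x, c x * h x ∂μ) := by
    apply LipschitzWith.of_dist_le_mul
    intro c₁ c₂
    rw [dist_eq_norm, ← integral_sub (hI c₁) (hI c₂)]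
    have hptw : (fun x => c₁ x * h x - c₂ x * h x) = fun x => (c₁ x - c₂ x) * h x := by
      funext x; ring
    rw [hptw]
    calc ‖∫ x, (c₁ x - c₂ x) * h x ∂μ‖ ≤ ∫ x, ‖(c₁ x - c₂ x) * h x‖ ∂μ :=
          norm_integral_le_integral_norm _
      _ ≤ ∫ x, dist c₁ c₂ * ‖h x‖ ∂μ := by
          refine integral_mono_of_nonneg (Filter.Eventually.of_forall fun x => norm_nonneg _)
            (hint.norm.const_mul _) (Filter.Eventually.of_forall fun x => ?_)
          show ‖(c₁ x - c₂ x) * h x‖ ≤ dist c₁ c₂ * ‖h x‖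
          rw [norm_mul]
          refine mul_le_mul_of_nonneg_right ?_ (norm_nonneg _)
          rw [← dist_eq_norm]
          exact ContinuousMap.dist_apply_le_dist x
      _ = Real.toNNReal (∫ x, ‖h x‖ ∂μ) * dist c₁ c₂ := by
          rw [integral_const_mul, Real.coe_toNNReal _ (integral_nonneg fun x => norm_nonneg _)]
          ring
  have hall : ∀ c : C(AddCircle (2 * π), ℂ), ∫ x, c x * h x ∂μ = 0 := by
    let p : Submodule ℂ C(AddCircle (2 * π), ℂ) :=
      { carrier := {c | ∫ x, c x * h x ∂μ = 0}
        add_mem' := by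
          intro a b ha hb
          simp only [Set.mem_setOf_eq, ContinuousMap.add_apply] at *
          have hptw : (fun x => (a x + b x) * h x) = fun x => a x * h x + b x * h x := by
            funext x; ring
          rw [hptw, integral_add (hI a) (hI b), ha, hb, add_zero]
        zero_mem' := by simp
        smul_mem' := by
          intro r c hc
          simp only [Set.mem_setOf_eq, ContinuousMap.smul_apply, smul_eq_mul] at *
          have hptw : (fun x => r * c x * h x) = fun x => r * (c x * h x) := by
            funext x; ring
          rw [hptw, integral_const_mul, hc, mul_zero] }
    have hpclosed : IsClosed (p : Set C(AddCircle (2 * π), ℂ)) :=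
      isClosed_eq hlip.continuous continuous_const
    have hsub : Submodule.span ℂ (Set.range (@fourier (2 * π))) ≤ p := by
      rw [Submodule.span_le]
      rintro - ⟨n, rfl⟩
      show (∫ x, fourier n x * h x ∂μ) = 0
      have h1 := hc (-n)
      rw [fourierCoeff] at h1
      simpa [smul_eq_mul] using h1
    have htop := Submodule.topologicalClosure_minimal _ hsub hpclosed
    rw [span_fourier_closure_eq_top] at htop
    intro c
    exact htop Submodule.mem_top
  have hre : (fun x => (h x).re) =ᵐ[μ] 0 := by
    refine aux_real_ae_zero hint.re (fun f => ?_)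
    set c : C(AddCircle (2 * π), ℂ) :=
      ⟨fun x => ((f x : ℝ) : ℂ),
        Complex.continuous_ofReal.comp (NNReal.continuous_coe.comp f.continuous)⟩ with hcdef
    have h0 := hall c
    have h1 : (∫ x, Complex.reCLM (c x * h x) ∂μ) = Complex.reCLM (∫ x, c x * h x ∂μ) :=
      ContinuousLinearMap.integral_comp_comm _ (hI c)
    rw [h0, map_zero] at h1
    rw [← h1]
    congr 1
    funext x
    simp [hcdef, Complex.mul_re]
  have him : (fun x => (h x).im) =ᵐ[μ] 0 := by
    refine aux_real_ae_zero hint.im (fun f => ?_)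
    set c : C(AddCircle (2 * π), ℂ) :=
      ⟨fun x => ((f x : ℝ) : ℂ),
        Complex.continuous_ofReal.comp (NNReal.continuous_coe.comp f.continuous)⟩ with hcdef
    have h0 := hall c
    have h1 : (∫ x, Complex.imCLM (c x * h x) ∂μ) = Complex.imCLM (∫ x, c x * h x ∂μ) :=
      ContinuousLinearMap.integral_comp_comm _ (hI c)
    rw [h0, map_zero] at h1
    rw [← h1]
    congr 1
    funext x
    simp [hcdef, Complex.mul_im]
  filter_upwards [hre, him] with x h1 h2
  have h1' : (h x).re = 0 := h1
  have h2' : (h x).im = 0 := h2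
  show h x = 0
  exact Complex.ext h1' h2'

lemma aux_fourier_unique {X : Type} [NormedAddCommGroup X] [NormedSpace ℂ X] [CompleteSpace X]
    {g : AddCircle (2 * π) → X} (hg : Integrable g haarAddCircle)
    (hc : ∀ n : ℤ, fourierCoeff g n = 0) : g =ᵐ[haarAddCircle] 0 := by
  obtain ⟨G, hGsm, hGae⟩ := hg.aestronglyMeasurable
  refine ae_eq_zero_of_forall_dual_of_isSeparable ℂ
    (hGsm.isSeparable_range.closure) (fun φ => ?_) ?_
  · have hφint : Integrable (fun x => φ (g x)) haarAddCircle := φ.integrable_comp hg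
    have hφc : ∀ n : ℤ, fourierCoeff (fun x => φ (g x)) n = 0 := fun n => by
      rw [aux_fourierCoeff_comp_clm φ hg n, hc n, map_zero]
    exact aux_fourier_unique_complex hφint hφc
  · filter_upwards [hGae] with x hx
    rw [hx]
    exact subset_closure (Set.mem_range_self x)

end Aux

theorem existence_uniqueness_of_multiplier
    {X : Type} [NormedAddCommGroup X] [NormedSpace ℂ X] [CompleteSpace X]
    (D : Submodule ℂ X) (A : D →ₗ[ℂ] X)
    (hclosed : IsClosed {q : X × X | ∃ h : q.1 ∈ D, A ⟨q.1, h⟩ = q.2})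
    (p : ℝ≥0∞) (hp1 : 1 ≤ p) (hp2 : p ≠ ⊤)
    (hbij : ∀ k : ℤ, Function.Bijective
      (fun x : D => (Complex.I * (k : ℂ)) ^ 3 • (x : X) - A x))
    (hmult : ∀ f : AddCircle (2 * π) → X, MemLp f p haarAddCircle →
      ∃ v : AddCircle (2 * π) → X, MemLp v p haarAddCircle ∧
        ∀ k : ℤ, ∀ x : D,
          (Complex.I * (k : ℂ)) ^ 3 • (x : X) - A x = fourierCoeff f k →
          fourierCoeff v k = (Complex.I * (k : ℂ)) ^ 3 • (x : X)) :
    ∀ f : AddCircle (2 * π) → X, MemLp f p haarAddCircle →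
      ∃ z : AddCircle (2 * π) → X, MemLp z p haarAddCircle ∧
        (∀ k : ℤ, ∃ h : fourierCoeff z k ∈ D,
          (Complex.I * (k : ℂ)) ^ 3 • fourierCoeff z k - A ⟨fourierCoeff z k, h⟩
            = fourierCoeff f k) ∧
        (∃ v : AddCircle (2 * π) → X, MemLp v p haarAddCircle ∧
          ∀ k : ℤ, fourierCoeff v k = (Complex.I * (k : ℂ)) ^ 3 • fourierCoeff z k) ∧
        ∀ z' : AddCircle (2 * π) → X, MemLp z' p haarAddCircle →
          (∀ k : ℤ, ∃ h : fourierCoeff z' k ∈ D,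
            (Complex.I * (k : ℂ)) ^ 3 • fourierCoeff z' k - A ⟨fourierCoeff z' k, h⟩
              = fourierCoeff f k) →
          z' =ᵐ[haarAddCircle] z := by
  intro f hf
  obtain ⟨v, hv, hvc⟩ := hmult f hf
  have hx : ∀ k : ℤ, ∃ x : D, (Complex.I * (k : ℂ)) ^ 3 • (x : X) - A x = fourierCoeff f k :=
    fun k => (hbij k).surjective (fourierCoeff f k)
  choose x hxeq using hx
  -- `A` is bijective (case `k = 0`)
  have hA : Function.Bijective A := by
    have h0 := hbij 0
    have heq : (fun x : D => (Complex.I * ((0 : ℤ) : ℂ)) ^ 3 • (x : X) - A x)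
        = fun x : D => -(A x) := by
      funext x; norm_num
    rw [heq] at h0
    have h2 : Function.Bijective ((fun y : X => -y) ∘ fun x : D => -(A x)) :=
      (neg_involutive (G := X)).bijective.comp h0
    have h3 : ((fun y : X => -y) ∘ fun x : D => -(A x)) = fun x : D => A x := by
      funext x; simp
    rw [h3] at h2
    exact h2
  let eA : D ≃ₗ[ℂ] X := LinearEquiv.ofBijective A hA
  let Blin : X →ₗ[ℂ] X := D.subtype.comp eA.symm.toLinearMap
  have hBgraph : IsClosed (Blin.graph : Set (X × X)) := by
    have hgr : (Blin.graph : Set (X × X))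
        = Prod.swap ⁻¹' {q : X × X | ∃ h : q.1 ∈ D, A ⟨q.1, h⟩ = q.2} := by
      ext q
      simp only [SetLike.mem_coe, LinearMap.mem_graph_iff, Set.mem_preimage, Prod.fst_swap,
        Prod.snd_swap, Set.mem_setOf_eq]
      constructor
      · intro hq
        have hmem : q.2 ∈ D := hq ▸ (eA.symm q.1).2
        refine ⟨hmem, ?_⟩
        have h1 : (⟨q.2, hmem⟩ : D) = eA.symm q.1 := Subtype.ext hq
        rw [h1]
        exact eA.apply_symm_apply q.1
      · rintro ⟨hmem, hA2⟩
        have h1 : eA.symm q.1 = ⟨q.2, hmem⟩ := by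
          rw [LinearEquiv.symm_apply_eq]
          exact hA2.symm
        show q.2 = Blin q.1
        show q.2 = ((eA.symm q.1 : D) : X)
        rw [h1]
    rw [hgr]
    exact hclosed.preimage continuous_swap
  let B : X →L[ℂ] X := ContinuousLinearMap.ofIsClosedGraph hBgraph
  have hB : ∀ y : X, B y = ((eA.symm y : D) : X) := fun y => rfl
  have hvint := hv.integrable hp1
  have hfint := hf.integrable hp1
  have hvf : Integrable (fun t => v t - f t) haarAddCircle := hvint.sub hfint
  set z : AddCircle (2 * π) → X := fun t => B (v t - f t) with hzdef
  have hzmem : MemLp z p haarAddCircle := B.comp_memLp' (hv.sub hf)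
  have hzc : ∀ k : ℤ, fourierCoeff z k = ((x k : D) : X) := by
    intro k
    have h1 : fourierCoeff z k = B (fourierCoeff (fun t => v t - f t) k) :=
      aux_fourierCoeff_comp_clm B hvf k
    have h2 : fourierCoeff (fun t => v t - f t) k = fourierCoeff v k - fourierCoeff f k :=
      aux_fourierCoeff_sub hvint hfint k
    have h3 : fourierCoeff v k = (Complex.I * (k : ℂ)) ^ 3 • ((x k : D) : X) :=
      hvc k (x k) (hxeq k)
    rw [h1, h2, h3, ← hxeq k, _root_.sub_sub_cancel, hB]
    exact congrArg Subtype.val (eA.symm_apply_apply (x k))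
  refine ⟨z, hzmem, ?_, ⟨v, hv, fun k => by rw [hzc k]; exact hvc k (x k) (hxeq k)⟩, ?_⟩
  · intro k
    rw [hzc k]
    refine ⟨(x k).2, ?_⟩
    rw [Subtype.coe_eta]
    exact hxeq k
  · intro z' hz' hz'c
    have hzeq : ∀ k : ℤ, fourierCoeff z' k = fourierCoeff z k := by
      intro k
      obtain ⟨hm, he⟩ := hz'c k
      have h4 : (⟨fourierCoeff z' k, hm⟩ : D) = x k :=
        (hbij k).injective (he.trans (hxeq k).symm)
      rw [hzc k, ← h4]
    have hall : ∀ k : ℤ, fourierCoeff (fun t => z' t - z t) k = 0 := fun k => by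
      rw [aux_fourierCoeff_sub (hz'.integrable hp1) (hzmem.integrable hp1) k, hzeq k, sub_self]
    have hae := aux_fourier_unique ((hz'.integrable hp1).sub (hzmem.integrable hp1)) hall
    filter_upwards [hae] with t ht
    have ht' : z' t - z t = 0 := ht
    exact sub_eq_zero.mp ht'
end
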